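/- Let ab and a'b' be segments in ℝ², and let a''b'' be the translate of a'b' whose midpoint coincides with the midpoint of ab. Then d_H(ab, a''b'') ≤ d_H(ab, a'b'). -/

import Mathlib

noncomputable abbrev E2 : Type := EuclideanSpace ℝ (Fin 2)

lemma mem_segment_param (m w : E2) (c : ℝ) (hc : |c| ≤ 1) :
    m + c • w ∈ segment ℝ (m - w) (m + w) := by
  rw [abs_le] at hc
  refine ⟨(1 - c) / 2, (1 + c) / 2, by linarith, by linarith, by ring, ?_⟩
  module

lemma segment_param (m u : E2) {x : E2} (hx : x ∈ segment ℝ (m - u) (m + u)) :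
    ∃ θ : ℝ, |θ| ≤ 1 ∧ x = m + θ • u := by
  obtain ⟨σ, τ, hσ, hτ, hστ, rfl⟩ := hx
  refine ⟨τ - σ, abs_le.2 ⟨by linarith, by linarith⟩, ?_⟩
  have hσ' : σ = 1 - τ := by linarith
  subst hσ'
  module

lemma directed_bound (m u w : E2) (r lam : ℝ) (hlam : |lam| ≤ 1)
    (h : ‖u - lam • w‖ ≤ r) :
    ∀ x ∈ segment ℝ (m - u) (m + u),
      Metric.infDist x (segment ℝ (m - w) (m + w)) ≤ r := by
  intro x hx
  obtain ⟨θ, hθ, rfl⟩ := segment_param m u hx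
  have hmem : m + (θ * lam) • w ∈ segment ℝ (m - w) (m + w) := by
    apply mem_segment_param
    rw [abs_mul]
    exact mul_le_one₀ hθ (abs_nonneg _) hlam
  refine le_trans (Metric.infDist_le_dist_of_mem hmem) ?_
  rw [dist_eq_norm]
  have heq : m + θ • u - (m + (θ * lam) • w) = θ • (u - lam • w) := by module
  rw [heq, norm_smul, Real.norm_eq_abs]
  calc |θ| * ‖u - lam • w‖ ≤ 1 * r :=
        mul_le_mul hθ h (norm_nonneg _) zero_le_one
    _ = r := one_mul r

lemma half_diff (u w X Y : E2) (α β r : ℝ) (hX : ‖X‖ ≤ r) (hY : ‖Y‖ ≤ r)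
    (hE : X - Y = (2:ℝ) • u - (β - α) • w) :
    ‖u - ((β - α) / 2) • w‖ ≤ r := by
  have h1 : u - ((β - α) / 2) • w = (2⁻¹ : ℝ) • (X - Y) := by
    rw [hE]; module
  rw [h1, norm_smul]
  have h2 := norm_sub_le X Y
  simp only [Real.norm_eq_abs]
  rw [abs_of_nonneg (by norm_num : (0:ℝ) ≤ (2⁻¹:ℝ))]
  nlinarith [norm_nonneg (X - Y)]


lemma isCompact_seg (x y : E2) : IsCompact (segment ℝ x y) := by
  rw [segment_eq_image]
  exact isCompact_Icc.image
    (((continuous_const.sub continuous_id).smul continuous_const).add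
      (continuous_id.smul continuous_const))

/-- Translating a'b' so that its midpoint coincides with that of ab does not increase
the Hausdorff distance to ab. -/
theorem hausdorff_dist_recenter_le (a b a' b' : E2)
    (v : E2) (hv : midpoint ℝ a' b' + v = midpoint ℝ a b) :
    Metric.hausdorffDist (segment ℝ a b) (segment ℝ (a' + v) (b' + v)) ≤
      Metric.hausdorffDist (segment ℝ a b) (segment ℝ a' b') := by
  set m : E2 := midpoint ℝ a b with hm
  set m' : E2 := midpoint ℝ a' b' with hm'
  set u : E2 := (2:ℝ)⁻¹ • (b - a) with hu
  set w : E2 := (2:ℝ)⁻¹ • (b' - a') with hw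
  have ha : a = m - u := by rw [hm, midpoint_eq_smul_add, invOf_eq_inv, hu]; module
  have hb : b = m + u := by rw [hm, midpoint_eq_smul_add, invOf_eq_inv, hu]; module
  have ha' : a' = m' - w := by rw [hm', midpoint_eq_smul_add, invOf_eq_inv, hw]; module
  have hb' : b' = m' + w := by rw [hm', midpoint_eq_smul_add, invOf_eq_inv, hw]; module
  have hvv : v = m - m' := by rw [← hv]; abel
  have ha'' : a' + v = m - w := by rw [ha', hvv]; abel
  have hb'' : b' + v = m + w := by rw [hb', hvv]; abel
  set r : ℝ := Metric.hausdorffDist (segment ℝ a b) (segment ℝ a' b') with hr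
  have hr0 : 0 ≤ r := Metric.hausdorffDist_nonneg
  have hS : (segment ℝ a b).Nonempty := ⟨a, left_mem_segment ℝ a b⟩
  have hS' : (segment ℝ a' b').Nonempty := ⟨a', left_mem_segment ℝ a' b'⟩
  have hfin : EMetric.hausdorffEdist (segment ℝ a b) (segment ℝ a' b') ≠ ⊤ :=
    Metric.hausdorffEdist_ne_top_of_nonempty_of_bounded hS hS'
      (isCompact_seg _ _).isBounded ((isCompact_seg _ _).isBounded)
  have hfin' : EMetric.hausdorffEdist (segment ℝ a' b') (segment ℝ a b) ≠ ⊤ := by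
    unfold EMetric.hausdorffEdist at hfin ⊢
    rwa [EMetric.hausdorffEdist_comm]
  -- distances of endpoints to the other segment
  have hia : Metric.infDist a (segment ℝ a' b') ≤ r :=
    Metric.infDist_le_hausdorffDist_of_mem (left_mem_segment ℝ a b) hfin
  have hib : Metric.infDist b (segment ℝ a' b') ≤ r :=
    Metric.infDist_le_hausdorffDist_of_mem (right_mem_segment ℝ a b) hfin
  have hia' : Metric.infDist a' (segment ℝ a b) ≤ r := by
    rw [hr, Metric.hausdorffDist_comm]
    exact Metric.infDist_le_hausdorffDist_of_mem (left_mem_segment ℝ a' b') hfin'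
  have hib' : Metric.infDist b' (segment ℝ a b) ≤ r := by
    rw [hr, Metric.hausdorffDist_comm]
    exact Metric.infDist_le_hausdorffDist_of_mem (right_mem_segment ℝ a' b') hfin'
  -- nearest points
  obtain ⟨p, hpmem, hpd⟩ := (isCompact_seg a' b').exists_infDist_eq_dist hS' a
  obtain ⟨q, hqmem, hqd⟩ := (isCompact_seg a' b').exists_infDist_eq_dist hS' b
  obtain ⟨p', hpmem', hpd'⟩ := (isCompact_seg a b).exists_infDist_eq_dist hS a'
  obtain ⟨q', hqmem', hqd'⟩ := (isCompact_seg a b).exists_infDist_eq_dist hS b'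
  rw [ha', hb'] at hpmem hqmem
  rw [ha, hb] at hpmem' hqmem'
  obtain ⟨α, hα, rfl⟩ := segment_param m' w hpmem
  obtain ⟨β, hβ, rfl⟩ := segment_param m' w hqmem
  obtain ⟨α', hα', rfl⟩ := segment_param m u hpmem'
  obtain ⟨β', hβ', rfl⟩ := segment_param m u hqmem'
  have hXa : ‖b - (m' + β • w)‖ ≤ r := by
    rw [← dist_eq_norm, ← hqd]; exact hib
  have hYa : ‖a - (m' + α • w)‖ ≤ r := by
    rw [← dist_eq_norm, ← hpd]; exact hia
  have hXb : ‖b' - (m + β' • u)‖ ≤ r := by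
    rw [← dist_eq_norm, ← hqd']; exact hib'
  have hYb : ‖a' - (m + α' • u)‖ ≤ r := by
    rw [← dist_eq_norm, ← hpd']; exact hia'
  have key1 : ‖u - ((β - α) / 2) • w‖ ≤ r := by
    refine half_diff u w _ _ α β r hXa hYa ?_
    rw [ha, hb]; module
  have key2 : ‖w - ((β' - α') / 2) • u‖ ≤ r := by
    refine half_diff w u _ _ α' β' r hXb hYb ?_
    rw [ha', hb']; module
  have hlam1 : |(β - α) / 2| ≤ 1 := by
    rw [abs_le] at *
    constructor <;> [skip; skip] <;> cases hα <;> cases hβ <;> linarith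
  have hlam2 : |(β' - α') / 2| ≤ 1 := by
    rw [abs_le] at *
    constructor <;> [skip; skip] <;> cases hα' <;> cases hβ' <;> linarith
  rw [ha, hb, ha'', hb'']
  refine Metric.hausdorffDist_le_of_infDist hr0 ?_ ?_
  · exact directed_bound m u w r _ hlam1 key1
  · exact directed_bound m w u r _ hlam2 key2
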